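/- Suppose for each k ≥ 0 the per-round reward differences satisfy Δr^{k,k} = −c, Δr^{k,k+1} ≥ b·V, and Δr^{k,h} ≥ 0 for all h > k+1, where b, c > 0 and V ≥ 0. Then the total episodic reward difference ΔG(H) = Σ_{k=0}^{H−1} Σ_{h=k}^{H−1} Δr^{k,h} satisfies ΔG(H) ≥ (H−1)·(b·V − c) − c for every H ≥ 2. In particular, if b·V − 2c > 0 (the H = 2 condition), then ΔG(H) > 0 and the lower bound is nondecreasing in H. -/

import Mathlib

theorem stmt17 (b c V : ℝ) (hb : 0 < b) (hc : 0 < c) (hV : 0 ≤ V)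
    (Δr : ℕ → ℕ → ℝ)
    (hdiag : ∀ k, Δr k k = -c)
    (hnext : ∀ k, b * V ≤ Δr k (k+1))
    (hpos : ∀ k h, k + 1 < h → 0 ≤ Δr k h) :
    (∀ H : ℕ, 2 ≤ H →
      ((H : ℝ) - 1) * (b * V - c) - c
        ≤ ∑ k ∈ Finset.range H, ∑ h ∈ Finset.Icc k (H-1), Δr k h) ∧
    (0 < b * V - 2 * c →
      (∀ H : ℕ, 2 ≤ H →
        0 < ∑ k ∈ Finset.range H, ∑ h ∈ Finset.Icc k (H-1), Δr k h) ∧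
      (∀ H₁ H₂ : ℕ, 2 ≤ H₁ → H₁ ≤ H₂ →
        ((H₁ : ℝ) - 1) * (b * V - c) - c
          ≤ ((H₂ : ℝ) - 1) * (b * V - c) - c)) := by
  have hinner : ∀ k m : ℕ, k + 1 ≤ m →
      b * V - c ≤ ∑ h ∈ Finset.Icc k m, Δr k h := by
    intro k m hkm
    have h1 : k ≤ m := le_trans (Nat.le_succ k) hkm
    rw [← Finset.insert_Icc_add_one_left_eq_Icc h1,
        Finset.sum_insert (by simp [Nat.lt_irrefl]),
        ← Finset.insert_Icc_add_one_left_eq_Icc hkm,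
        Finset.sum_insert (by simp)]
    have h2 : 0 ≤ ∑ h ∈ Finset.Icc (k+1+1) m, Δr k h :=
      Finset.sum_nonneg fun h hh => hpos k h (Finset.mem_Icc.mp hh).1
    have := hnext k
    rw [hdiag k]
    linarith
  have key : ∀ H : ℕ, 2 ≤ H →
      ((H : ℝ) - 1) * (b * V - c) - c
        ≤ ∑ k ∈ Finset.range H, ∑ h ∈ Finset.Icc k (H-1), Δr k h := by
    intro H hH
    obtain ⟨n, rfl⟩ : ∃ n, H = n + 1 := ⟨H - 1, (Nat.succ_pred_eq_of_pos (by omega)).symm⟩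
    rw [Finset.sum_range_succ]
    have hlast : ∑ h ∈ Finset.Icc n (n+1-1), Δr n h = -c := by
      simp [hdiag]
    rw [hlast]
    have hn : 1 ≤ n := by omega
    have hbound : (n : ℝ) * (b * V - c) ≤
        ∑ k ∈ Finset.range n, ∑ h ∈ Finset.Icc k (n+1-1), Δr k h := by
      calc (n : ℝ) * (b * V - c)
          = ∑ _k ∈ Finset.range n, (b * V - c) := by
            rw [Finset.sum_const, Finset.card_range, nsmul_eq_mul]
        _ ≤ _ := Finset.sum_le_sum fun k hk => by
            have : k + 1 ≤ n + 1 - 1 := by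
              have := Finset.mem_range.mp hk; omega
            exact hinner k (n+1-1) this
    simp only [Nat.add_sub_cancel] at hbound ⊢
    push_cast
    linarith
  refine ⟨key, fun hbc => ⟨fun H hH => ?_, fun H₁ H₂ h1 h12 => ?_⟩⟩
  · have := key H hH
    have hH' : (2 : ℝ) ≤ (H : ℝ) := by exact_mod_cast hH
    nlinarith
  · have : (H₁ : ℝ) ≤ (H₂ : ℝ) := by exact_mod_cast h12
    nlinarith
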